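/- Define h(t) = g'(t)/(f'(t) + t·f''(t)), where g(t) = f'(t)^{m-1}·(f'(t) + t·f''(t)). Then there exist constants C > 0 and T > 0 such that for all t ≥ T, |h(t) - 4^{2-m}·(m-1)·e·t^{-m}| ≤ C·t^{1-2m}. -/

import Mathlib

namespace Stmt7Aux

noncomputable def Af (m : ℕ) (e c t : ℝ) : ℝ :=
  1/4 - e * t ^ ((1:ℤ) - m) + (1 - (m:ℝ)) * c * t ^ (-(m:ℤ))
noncomputable def Ad (m : ℕ) (e c t : ℝ) : ℝ :=
  ((m:ℝ) - 1) * e * t ^ (-(m:ℤ)) + (m:ℝ) * ((m:ℝ) - 1) * c * t ^ (-(m:ℤ) - 1)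
noncomputable def Add (m : ℕ) (e c t : ℝ) : ℝ :=
  -(m:ℝ) * ((m:ℝ) - 1) * e * t ^ (-(m:ℤ) - 1)
    + (m:ℝ) * ((m:ℝ) - 1) * (-(m:ℝ) - 1) * c * t ^ (-(m:ℤ) - 2)
noncomputable def Bf (m : ℕ) (e c t : ℝ) : ℝ := Af m e c t + t * Ad m e c t
noncomputable def Bd (m : ℕ) (e c t : ℝ) : ℝ := 2 * Ad m e c t + t * Add m e c t


lemma hasDerivAt_F (m : ℕ) (hm : 2 < m) (e c : ℝ) {t : ℝ} (ht : t ≠ 0) :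
    HasDerivAt (fun s : ℝ => s / 4 + e * (1 - s ^ ((2:ℤ) - m)) / ((2:ℝ) - m) + c * s ^ ((1:ℤ) - m))
      (Af m e c t) t := by
  have hm2 : ((2:ℝ) - m) ≠ 0 := by
    have : (2:ℝ) < m := by exact_mod_cast hm
    linarith
  have h1 : HasDerivAt (fun s : ℝ => s / 4) (1 / 4 : ℝ) t := by
    simpa using (hasDerivAt_id t).div_const 4
  have h2 : HasDerivAt (fun s : ℝ => e * (1 - s ^ ((2:ℤ) - m)) / ((2:ℝ) - m))
      (e * (0 - (((2:ℤ) - m : ℤ) : ℝ) * t ^ ((2:ℤ) - m - 1)) / ((2:ℝ) - m)) t :=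
    (((hasDerivAt_const t (1:ℝ)).sub (hasDerivAt_zpow ((2:ℤ) - m) t (Or.inl ht))).const_mul
      e).div_const _
  have h3 : HasDerivAt (fun s : ℝ => c * s ^ ((1:ℤ) - m))
      (c * ((((1:ℤ) - m : ℤ) : ℝ) * t ^ ((1:ℤ) - m - 1))) t :=
    (hasDerivAt_zpow ((1:ℤ) - m) t (Or.inl ht)).const_mul c
  have := (h1.add h2).add h3
  refine this.congr_deriv ?_
  have e1 : (2:ℤ) - m - 1 = (1:ℤ) - m := by ring
  have e2 : (1:ℤ) - m - 1 = -(m:ℤ) := by ring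
  rw [e1, e2, Af]
  push_cast
  field_simp
  ring

lemma hasDerivAt_Af (m : ℕ) (e c : ℝ) {t : ℝ} (ht : t ≠ 0) :
    HasDerivAt (Af m e c) (Ad m e c t) t := by
  have h1 : HasDerivAt (fun s : ℝ => 1/4 - e * s ^ ((1:ℤ) - m) + (1 - (m:ℝ)) * c * s ^ (-(m:ℤ)))
      (0 - e * ((((1:ℤ) - m : ℤ) : ℝ) * t ^ ((1:ℤ) - m - 1))
        + (1 - (m:ℝ)) * c * (((-(m:ℤ) : ℤ) : ℝ) * t ^ (-(m:ℤ) - 1))) t :=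
    ((hasDerivAt_const t (1/4:ℝ)).sub
      ((hasDerivAt_zpow ((1:ℤ) - m) t (Or.inl ht)).const_mul e)).add
      ((hasDerivAt_zpow (-(m:ℤ)) t (Or.inl ht)).const_mul ((1 - (m:ℝ)) * c))
  have hfun : (Af m e c) = fun s : ℝ =>
      1/4 - e * s ^ ((1:ℤ) - m) + (1 - (m:ℝ)) * c * s ^ (-(m:ℤ)) := rfl
  rw [hfun]
  convert h1 using 1
  have e2 : (1:ℤ) - m - 1 = -(m:ℤ) := by ring
  rw [e2, Ad]
  push_cast
  ring

lemma hasDerivAt_Ad (m : ℕ) (e c : ℝ) {t : ℝ} (ht : t ≠ 0) :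
    HasDerivAt (Ad m e c) (Add m e c t) t := by
  have h1 : HasDerivAt (fun s : ℝ =>
      ((m:ℝ) - 1) * e * s ^ (-(m:ℤ)) + (m:ℝ) * ((m:ℝ) - 1) * c * s ^ (-(m:ℤ) - 1))
      (((m:ℝ) - 1) * e * (((-(m:ℤ) : ℤ) : ℝ) * t ^ (-(m:ℤ) - 1))
        + (m:ℝ) * ((m:ℝ) - 1) * c * (((-(m:ℤ) - 1 : ℤ) : ℝ) * t ^ (-(m:ℤ) - 1 - 1))) t :=
    ((hasDerivAt_zpow (-(m:ℤ)) t (Or.inl ht)).const_mul (((m:ℝ) - 1) * e)).add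
      ((hasDerivAt_zpow (-(m:ℤ) - 1) t (Or.inl ht)).const_mul ((m:ℝ) * ((m:ℝ) - 1) * c))
  have hfun : (Ad m e c) = fun s : ℝ =>
      ((m:ℝ) - 1) * e * s ^ (-(m:ℤ)) + (m:ℝ) * ((m:ℝ) - 1) * c * s ^ (-(m:ℤ) - 1) := rfl
  rw [hfun]
  convert h1 using 1
  have e2 : -(m:ℤ) - 1 - 1 = -(m:ℤ) - 2 := by ring
  rw [e2, Add]
  push_cast
  ring



lemma pow_sub_pow_abs_le (x y : ℝ) (hx : |x| ≤ 1) (hy : |y| ≤ 1) (k : ℕ) :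
    |x ^ k - y ^ k| ≤ k * |x - y| := by
  induction k with
  | zero => simp
  | succ n ih =>
    have hid : x ^ (n + 1) - y ^ (n + 1) = x ^ n * (x - y) + y * (x ^ n - y ^ n) := by ring
    calc |x ^ (n + 1) - y ^ (n + 1)| = |x ^ n * (x - y) + y * (x ^ n - y ^ n)| := by rw [hid]
      _ ≤ |x ^ n * (x - y)| + |y * (x ^ n - y ^ n)| := abs_add_le _ _
      _ = |x| ^ n * |x - y| + |y| * |x ^ n - y ^ n| := by rw [abs_mul, abs_mul, abs_pow]
      _ ≤ 1 ^ n * |x - y| + 1 * (n * |x - y|) := by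
          have h1 : |x| ^ n ≤ 1 ^ n := pow_le_pow_left₀ (abs_nonneg x) hx n
          have h2 : |y| * |x ^ n - y ^ n| ≤ 1 * (n * |x - y|) := by
            calc |y| * |x ^ n - y ^ n| ≤ 1 * |x ^ n - y ^ n| :=
                  mul_le_mul_of_nonneg_right hy (abs_nonneg _)
              _ ≤ 1 * (n * |x - y|) := by simpa using ih
          nlinarith [abs_nonneg (x - y)]
      _ = (↑(n + 1)) * |x - y| := by push_cast; ring

lemma two_term_bound {p q u v : ℝ} (hu : 0 < u) (hv : 0 < v) (hvu : v ≤ u) :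
    |p * u + q * v| ≤ (|p| + |q|) * u := by
  calc |p * u + q * v| ≤ |p * u| + |q * v| := abs_add_le _ _
    _ = |p| * u + |q| * v := by rw [abs_mul, abs_mul, abs_of_pos hu, abs_of_pos hv]
    _ ≤ (|p| + |q|) * u := by nlinarith [abs_nonneg q, abs_nonneg p]

/-- derivative of G s = Af s ^ (m-1) * (Af s + s * Ad s) -/
lemma hasDerivAt_G (m : ℕ) (hm : 2 < m) (e c : ℝ) {t : ℝ} (ht : t ≠ 0) :
    HasDerivAt (fun s : ℝ => Af m e c s ^ (m - 1) * (Af m e c s + s * Ad m e c s))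
      (((m:ℝ) - 1) * Af m e c t ^ (m - 2) * Ad m e c t * Bf m e c t
        + Af m e c t ^ (m - 1) * Bd m e c t) t := by
  have hA := hasDerivAt_Af m e c ht
  have hAd := hasDerivAt_Ad m e c ht
  have hpow : HasDerivAt (fun s : ℝ => Af m e c s ^ (m - 1))
      ((m - 1 : ℕ) * Af m e c t ^ (m - 1 - 1) * Ad m e c t) t := hA.pow (m - 1)
  have hB : HasDerivAt (fun s : ℝ => Af m e c s + s * Ad m e c s)
      (Ad m e c t + (1 * Ad m e c t + t * Add m e c t)) t :=
    hA.add ((hasDerivAt_id t).mul hAd)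
  have := hpow.mul hB
  refine this.congr_deriv ?_
  have e1 : m - 1 - 1 = m - 2 := by omega
  have e2 : ((m - 1 : ℕ) : ℝ) = (m : ℝ) - 1 := by
    have : (1:ℕ) ≤ m := by omega
    push_cast [this]
    ring
  rw [e1, e2, Bf, Bd]
  ring

/-- key identity -/
lemma key_identity (m : ℕ) (hm : 2 < m) (e c : ℝ) {t : ℝ} (ht : t ≠ 0) :
    ((m:ℝ) - 1) * Ad m e c t * Bf m e c t + (1/4) * Bd m e c t
        - ((m:ℝ) - 1) * e * t ^ (-(m:ℤ)) * Bf m e c t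
      = ((m:ℝ) * ((m:ℝ) - 1) ^ 2 * c * t ^ (-(m:ℤ) - 1)
          + ((m:ℝ) - 1) * ((m:ℝ) - 2) * e * t ^ (-(m:ℤ)))
        * (((m:ℝ) - 2) * e * t ^ ((1:ℤ) - m) + ((m:ℝ) - 1) ^ 2 * c * t ^ (-(m:ℤ))) := by
  have h1 : t ^ (-(m:ℤ)) = t ^ ((1:ℤ) - m) * t⁻¹ := by
    have e0 : -(m:ℤ) = ((1:ℤ) - m) - 1 := by ring
    rw [e0, ← zpow_sub_one₀ ht]
  have h2 : t ^ (-(m:ℤ) - 1) = t ^ ((1:ℤ) - m) * t⁻¹ * t⁻¹ := by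
    have e0 : -(m:ℤ) - 1 = ((1:ℤ) - m) - 1 - 1 := by ring
    rw [e0, ← zpow_sub_one₀ ht, ← zpow_sub_one₀ ht]
  have h3 : t ^ (-(m:ℤ) - 2) = t ^ ((1:ℤ) - m) * t⁻¹ * t⁻¹ * t⁻¹ := by
    have e0 : -(m:ℤ) - 2 = ((1:ℤ) - m) - 1 - 1 - 1 := by ring
    rw [e0, ← zpow_sub_one₀ ht, ← zpow_sub_one₀ ht, ← zpow_sub_one₀ ht]
  rw [Bf, Bd, Af, Ad, Add, h3, h2, h1]
  field_simp
  ring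

-- explicit forms
lemma Bf_eq (m : ℕ) (e c : ℝ) {t : ℝ} (ht : t ≠ 0) :
    Bf m e c t = 1/4 + ((m:ℝ) - 2) * e * t ^ ((1:ℤ) - m)
      + ((m:ℝ) - 1) ^ 2 * c * t ^ (-(m:ℤ)) := by
  have h1 : t ^ (-(m:ℤ)) = t ^ ((1:ℤ) - m) * t⁻¹ := by
    have e0 : -(m:ℤ) = ((1:ℤ) - m) - 1 := by ring
    rw [e0, ← zpow_sub_one₀ ht]
  have h2 : t ^ (-(m:ℤ) - 1) = t ^ ((1:ℤ) - m) * t⁻¹ * t⁻¹ := by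
    have e0 : -(m:ℤ) - 1 = ((1:ℤ) - m) - 1 - 1 := by ring
    rw [e0, ← zpow_sub_one₀ ht, ← zpow_sub_one₀ ht]
  rw [Bf, Af, Ad, h2, h1]
  field_simp
  ring

lemma Bd_eq (m : ℕ) (e c : ℝ) {t : ℝ} (ht : t ≠ 0) :
    Bd m e c t = ((m:ℝ) - 2) * (1 - (m:ℝ)) * e * t ^ (-(m:ℤ))
      + (-(m:ℝ) * ((m:ℝ) - 1) ^ 2 * c) * t ^ (-(m:ℤ) - 1) := by
  have h1 : t ^ (-(m:ℤ)) = t ^ ((1:ℤ) - m) * t⁻¹ := by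
    have e0 : -(m:ℤ) = ((1:ℤ) - m) - 1 := by ring
    rw [e0, ← zpow_sub_one₀ ht]
  have h2 : t ^ (-(m:ℤ) - 1) = t ^ ((1:ℤ) - m) * t⁻¹ * t⁻¹ := by
    have e0 : -(m:ℤ) - 1 = ((1:ℤ) - m) - 1 - 1 := by ring
    rw [e0, ← zpow_sub_one₀ ht, ← zpow_sub_one₀ ht]
  have h3 : t ^ (-(m:ℤ) - 2) = t ^ ((1:ℤ) - m) * t⁻¹ * t⁻¹ * t⁻¹ := by
    have e0 : -(m:ℤ) - 2 = ((1:ℤ) - m) - 1 - 1 - 1 := by ring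
    rw [e0, ← zpow_sub_one₀ ht, ← zpow_sub_one₀ ht, ← zpow_sub_one₀ ht]
  rw [Bd, Ad, Add, h3, h2, h1]
  field_simp
  ring

set_option maxHeartbeats 2000000 in
lemma estimate (m : ℕ) (hm : 2 < m) (e c : ℝ) :
    ∃ C > (0:ℝ), ∃ T > (0:ℝ), ∀ t ≥ T, Bf m e c t ≠ 0 ∧
      |(((m:ℝ) - 1) * Af m e c t ^ (m - 2) * Ad m e c t * Bf m e c t
            + Af m e c t ^ (m - 1) * Bd m e c t) / Bf m e c t
          - (4:ℝ) ^ ((2:ℤ) - m) * ((m:ℝ) - 1) * e * t ^ (-(m:ℤ))|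
        ≤ C * t ^ ((1:ℤ) - 2 * m) := by
  have hm3 : (3:ℝ) ≤ (m:ℝ) := by exact_mod_cast hm
  -- constants
  obtain ⟨cA, hcA⟩ : ∃ x : ℝ, x = |e| + |(1 - (m:ℝ)) * c| := ⟨_, rfl⟩
  obtain ⟨cAd, hcAd⟩ : ∃ x : ℝ, x = |((m:ℝ) - 1) * e| + |(m:ℝ) * ((m:ℝ) - 1) * c| := ⟨_, rfl⟩
  obtain ⟨cB, hcB⟩ : ∃ x : ℝ, x = |((m:ℝ) - 2) * e| + |((m:ℝ) - 1) ^ 2 * c| := ⟨_, rfl⟩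
  obtain ⟨cBd, hcBd⟩ : ∃ x : ℝ, x = |((m:ℝ) - 2) * (1 - (m:ℝ)) * e| + |(-(m:ℝ) * ((m:ℝ) - 1) ^ 2 * c)| := ⟨_, rfl⟩
  obtain ⟨cK, hcK⟩ : ∃ x : ℝ, x = |((m:ℝ) - 1) * ((m:ℝ) - 2) * e| + |(m:ℝ) * ((m:ℝ) - 1) ^ 2 * c| := ⟨_, rfl⟩
  obtain ⟨cW, hcW⟩ : ∃ x : ℝ, x = |((m:ℝ) - 2) * e| + |((m:ℝ) - 1) ^ 2 * c| := ⟨_, rfl⟩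
  have hcA0 : 0 ≤ cA := by rw [hcA]; positivity
  have hcAd0 : 0 ≤ cAd := by rw [hcAd]; positivity
  have hcB0 : 0 ≤ cB := by rw [hcB]; positivity
  have hcBd0 : 0 ≤ cBd := by rw [hcBd]; positivity
  have hcK0 : 0 ≤ cK := by rw [hcK]; positivity
  have hcW0 : 0 ≤ cW := by rw [hcW]; positivity
  obtain ⟨C₁, hC₁⟩ : ∃ x : ℝ, x = cK * cW + (m:ℝ) * (m:ℝ) * cA * cAd + (m:ℝ) * cA * cBd := ⟨_, rfl⟩
  have hC₁0 : 0 ≤ C₁ := by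
    rw [hC₁]; positivity
  refine ⟨8 * C₁ + 1, by linarith only [hC₁0], 1 + 8 * cA + 8 * cB, by linarith only [hcA0, hcB0], ?_⟩
  intro t htT
  have ht1 : (1:ℝ) ≤ t := by linarith only [htT, hcA0, hcB0]
  have ht0 : (0:ℝ) < t := by linarith only [ht1]
  have htne : t ≠ 0 := ht0.ne'
  -- powers
  obtain ⟨u, hu⟩ : ∃ x : ℝ, x = t ^ ((1:ℤ) - m) := ⟨_, rfl⟩
  obtain ⟨v, hv⟩ : ∃ x : ℝ, x = t ^ (-(m:ℤ)) := ⟨_, rfl⟩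
  obtain ⟨w, hw⟩ : ∃ x : ℝ, x = t ^ (-(m:ℤ) - 1) := ⟨_, rfl⟩
  have hu0 : 0 < u := hu ▸ zpow_pos ht0 _
  have hv0 : 0 < v := hv ▸ zpow_pos ht0 _
  have hw0 : 0 < w := hw ▸ zpow_pos ht0 _
  have hvu : v ≤ u := by rw [hu, hv]; exact zpow_le_zpow_right₀ ht1 (by omega)
  have hwv : w ≤ v := by rw [hv, hw]; exact zpow_le_zpow_right₀ ht1 (by omega)
  have hut : u ≤ t⁻¹ := by
    rw [hu]
    have : t ^ ((1:ℤ) - m) ≤ t ^ (-1 : ℤ) := zpow_le_zpow_right₀ ht1 (by omega)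
    simpa [zpow_neg] using this
  have huv : u * v = t ^ ((1:ℤ) - 2 * m) := by
    rw [hu, hv, ← zpow_add₀ htne]
    congr 1
    ring
  -- smallness of u
  have htinv : t⁻¹ ≤ (1 + 8 * cA + 8 * cB)⁻¹ := by
    exact inv_anti₀ (by linarith only [hcA0, hcB0]) htT
  have hcAu : cA * u ≤ 1 / 8 := by
    have h1 : cA * u ≤ cA * (1 + 8 * cA + 8 * cB)⁻¹ := by
      apply mul_le_mul_of_nonneg_left (hut.trans htinv) hcA0
    have h2 : cA * (1 + 8 * cA + 8 * cB)⁻¹ ≤ 1 / 8 := by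
      rw [mul_inv_le_iff₀ (by positivity)]
      linarith only [hcA0, hcB0]
    linarith only [h1, h2]
  have hcBu : cB * u ≤ 1 / 8 := by
    have h1 : cB * u ≤ cB * (1 + 8 * cA + 8 * cB)⁻¹ := by
      apply mul_le_mul_of_nonneg_left (hut.trans htinv) hcB0
    have h2 : cB * (1 + 8 * cA + 8 * cB)⁻¹ ≤ 1 / 8 := by
      rw [mul_inv_le_iff₀ (by positivity)]
      linarith only [hcA0, hcB0]
    linarith only [h1, h2]
  -- basic bounds
  have hAsub : |Af m e c t - 1/4| ≤ cA * u := by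
    have : Af m e c t - 1/4 = (-e) * u + ((1 - (m:ℝ)) * c) * v := by rw [Af, hu, hv]; ring
    rw [this, hcA]
    simpa [abs_neg] using two_term_bound (p := -e) (q := (1 - (m:ℝ)) * c) hu0 hv0 hvu
  have hAd : |Ad m e c t| ≤ cAd * v := by
    rw [Ad, hcAd, hv]
    exact two_term_bound (zpow_pos ht0 _) (zpow_pos ht0 _) (by rw [← hv, ← hw]; exact hwv)
  have hBsub : |Bf m e c t - 1/4| ≤ cB * u := by
    have : Bf m e c t - 1/4 = (((m:ℝ) - 2) * e) * u + (((m:ℝ) - 1) ^ 2 * c) * v := by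
      rw [Bf_eq m e c htne, hu, hv]; ring
    rw [this, hcB]
    exact two_term_bound hu0 hv0 hvu
  have hBd : |Bd m e c t| ≤ cBd * v := by
    rw [Bd_eq m e c htne, hcBd, hv]
    exact two_term_bound (zpow_pos ht0 _) (zpow_pos ht0 _) (by rw [← hv, ← hw]; exact hwv)
  -- Bf is bounded below and above
  have hBlow : (1:ℝ)/8 ≤ Bf m e c t := by
    have := abs_le.mp hBsub
    linarith only [this.1, hcBu]
  have hBup : |Bf m e c t| ≤ 1/2 := by
    have := abs_le.mp hBsub
    rw [abs_le]
    constructor <;> linarith only [this.1, this.2, hcBu]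
  have hBne : Bf m e c t ≠ 0 := by linarith
  refine ⟨hBne, ?_⟩
  -- Af bounded
  have hAabs : |Af m e c t| ≤ 1 := by
    have := abs_le.mp hAsub
    rw [abs_le]
    constructor <;> linarith only [this.1, this.2, hcAu]
  have hD2 : |Af m e c t ^ (m - 2) - (1/4 : ℝ) ^ (m - 2)| ≤ (m:ℝ) * (cA * u) := by
    have h := pow_sub_pow_abs_le (Af m e c t) (1/4) hAabs (by rw [abs_of_pos] <;> norm_num) (m - 2)
    have hle : ((m - 2 : ℕ) : ℝ) ≤ (m:ℝ) := by
      have : ((m - 2 : ℕ) : ℝ) ≤ ((m : ℕ) : ℝ) := by exact_mod_cast Nat.sub_le m 2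
      simpa using this
    calc |Af m e c t ^ (m - 2) - (1/4 : ℝ) ^ (m - 2)| ≤ (m - 2 : ℕ) * |Af m e c t - 1/4| := h
      _ ≤ (m:ℝ) * (cA * u) := by nlinarith [abs_nonneg (Af m e c t - 1/4), hle, hAsub]
  have hD1 : |Af m e c t ^ (m - 1) - (1/4 : ℝ) ^ (m - 1)| ≤ (m:ℝ) * (cA * u) := by
    have h := pow_sub_pow_abs_le (Af m e c t) (1/4) hAabs (by rw [abs_of_pos] <;> norm_num) (m - 1)
    have hle : ((m - 1 : ℕ) : ℝ) ≤ (m:ℝ) := by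
      have : ((m - 1 : ℕ) : ℝ) ≤ ((m : ℕ) : ℝ) := by exact_mod_cast Nat.sub_le m 1
      simpa using this
    calc |Af m e c t ^ (m - 1) - (1/4 : ℝ) ^ (m - 1)| ≤ (m - 1 : ℕ) * |Af m e c t - 1/4| := h
      _ ≤ (m:ℝ) * (cA * u) := by nlinarith [abs_nonneg (Af m e c t - 1/4), hle, hAsub]
  -- K and W bounds
  have hK : |(m:ℝ) * ((m:ℝ) - 1) ^ 2 * c * w + ((m:ℝ) - 1) * ((m:ℝ) - 2) * e * v| ≤ cK * v := by
    have h0 : (m:ℝ) * ((m:ℝ) - 1) ^ 2 * c * w + ((m:ℝ) - 1) * ((m:ℝ) - 2) * e * v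
        = (((m:ℝ) - 1) * ((m:ℝ) - 2) * e) * v + ((m:ℝ) * ((m:ℝ) - 1) ^ 2 * c) * w := by ring
    rw [h0, hcK]
    exact two_term_bound hv0 hw0 hwv
  have hW : |((m:ℝ) - 2) * e * u + ((m:ℝ) - 1) ^ 2 * c * v| ≤ cW * u := by
    rw [hcW]
    exact two_term_bound hu0 hv0 hvu
  -- opaque K and W
  obtain ⟨KK, hKK⟩ : ∃ x : ℝ, x = (m:ℝ) * ((m:ℝ) - 1) ^ 2 * c * w
      + ((m:ℝ) - 1) * ((m:ℝ) - 2) * e * v := ⟨_, rfl⟩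
  obtain ⟨WW, hWW⟩ : ∃ x : ℝ, x = ((m:ℝ) - 2) * e * u + ((m:ℝ) - 1) ^ 2 * c * v := ⟨_, rfl⟩
  rw [← hKK] at hK
  rw [← hWW] at hW
  -- 4 ^ (2 - m)
  have h4 : (4:ℝ) ^ ((2:ℤ) - m) = (1/4 : ℝ) ^ (m - 2) := by
    have he : (2:ℤ) - m = -((m - 2 : ℕ) : ℤ) := by omega
    rw [he, zpow_neg, zpow_natCast, ← inv_pow]
    norm_num
  obtain ⟨Y, hY⟩ : ∃ x : ℝ, x = (1/4 : ℝ) ^ (m - 2) := ⟨_, rfl⟩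
  have hY1 : Y ≤ 1 := by rw [hY]; exact pow_le_one₀ (by norm_num) (by norm_num)
  have hY0 : (0:ℝ) < Y := by rw [hY]; positivity
  have hAp : Af m e c t ^ (m - 1) = Af m e c t ^ (m - 2) * Af m e c t := by
    rw [← pow_succ]; congr 1; omega
  have hQp : (1/4:ℝ) ^ (m - 1) = Y * (1/4) := by
    rw [hY, ← pow_succ]; congr 1; omega
  -- numerator
  obtain ⟨N, hN⟩ : ∃ x : ℝ, x = ((m:ℝ) - 1) * Af m e c t ^ (m - 2) * Ad m e c t * Bf m e c t
      + Af m e c t ^ (m - 1) * Bd m e c t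
      - Y * ((m:ℝ) - 1) * e * v * Bf m e c t := ⟨_, rfl⟩
  have hdecomp : N = Y * (KK * WW)
      + ((m:ℝ) - 1) * (Af m e c t ^ (m - 2) - Y) * Ad m e c t * Bf m e c t
      + (Af m e c t ^ (m - 1) - Y * (1/4)) * Bd m e c t := by
    have key := key_identity m hm e c htne
    rw [← hu, ← hv, ← hw, ← hKK, ← hWW] at key
    rw [hN, hAp]
    linear_combination Y * key
  have hD1' : |Af m e c t ^ (m - 1) - Y * (1/4)| ≤ (m:ℝ) * (cA * u) := by
    rw [← hQp]; exact hD1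
  have hD2' : |Af m e c t ^ (m - 2) - Y| ≤ (m:ℝ) * (cA * u) := by
    rw [hY]; exact hD2
  -- bound the three terms
  have hb1 : |Y * (KK * WW)| ≤ cK * cW * (u * v) := by
    rw [abs_mul, abs_mul, abs_of_pos hY0]
    calc Y * (|KK| * |WW|) ≤ 1 * ((cK * v) * (cW * u)) := by
          refine mul_le_mul hY1 (mul_le_mul hK hW (abs_nonneg _) (by positivity))
            (by positivity) zero_le_one
      _ = cK * cW * (u * v) := by ring
  have hm0 : (0:ℝ) ≤ (m:ℝ) := by positivity
  have hb2 : |((m:ℝ) - 1) * (Af m e c t ^ (m - 2) - Y) * Ad m e c t * Bf m e c t|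
      ≤ (m:ℝ) * (m:ℝ) * cA * cAd * (u * v) := by
    rw [abs_mul, abs_mul, abs_mul]
    have hmm : |(m:ℝ) - 1| ≤ (m:ℝ) := by
      rw [abs_of_pos (by linarith only [hm3])]; linarith only [hm3]
    calc |(m:ℝ) - 1| * |Af m e c t ^ (m - 2) - Y| * |Ad m e c t| * |Bf m e c t|
        ≤ (m:ℝ) * ((m:ℝ) * (cA * u)) * (cAd * v) * 1 := by
          gcongr
          · linarith only [hBup]
      _ = (m:ℝ) * (m:ℝ) * cA * cAd * (u * v) := by ring
  have hb3 : |(Af m e c t ^ (m - 1) - Y * (1/4)) * Bd m e c t|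
      ≤ (m:ℝ) * cA * cBd * (u * v) := by
    rw [abs_mul]
    calc |Af m e c t ^ (m - 1) - Y * (1/4)| * |Bd m e c t|
        ≤ ((m:ℝ) * (cA * u)) * (cBd * v) := by gcongr
      _ = (m:ℝ) * cA * cBd * (u * v) := by ring
  have hNb : |N| ≤ C₁ * (u * v) := by
    have htri : |N| ≤ |Y * (KK * WW)|
        + |((m:ℝ) - 1) * (Af m e c t ^ (m - 2) - Y) * Ad m e c t * Bf m e c t|
        + |(Af m e c t ^ (m - 1) - Y * (1/4)) * Bd m e c t| := by
      rw [hdecomp]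
      exact abs_add_three _ _ _
    have hsum : cK * cW * (u * v) + (m:ℝ) * (m:ℝ) * cA * cAd * (u * v)
        + (m:ℝ) * cA * cBd * (u * v) = C₁ * (u * v) := by rw [hC₁]; ring
    linarith only [htri, hb1, hb2, hb3, hsum]
  -- conclusion
  rw [h4, ← hY, ← hv]
  have hfrac : (((m:ℝ) - 1) * Af m e c t ^ (m - 2) * Ad m e c t * Bf m e c t
        + Af m e c t ^ (m - 1) * Bd m e c t) / Bf m e c t
      - Y * ((m:ℝ) - 1) * e * v = N / Bf m e c t := by
    rw [hN]
    field_simp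
  rw [hfrac, abs_div, abs_of_pos (by linarith only [hBlow] : (0:ℝ) < Bf m e c t)]
  have hstep : |N| / Bf m e c t ≤ (C₁ * (u * v)) / (1/8) := by
    apply div_le_div₀ (by positivity) hNb (by norm_num) hBlow
  have huv' : (0:ℝ) < u * v := mul_pos hu0 hv0
  calc |N| / Bf m e c t ≤ (C₁ * (u * v)) / (1/8) := hstep
    _ = 8 * C₁ * (u * v) := by ring
    _ ≤ (8 * C₁ + 1) * (u * v) := by
        apply mul_le_mul_of_nonneg_right (by linarith only []) huv'.le
    _ = (8 * C₁ + 1) * t ^ ((1:ℤ) - 2 * m) := by rw [huv]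


end Stmt7Aux

open Stmt7Aux in
/-- Define `h(t) = g'(t) / (f'(t) + t f''(t))` where `g(t) = f'(t)^{m-1} (f'(t) + t f''(t))` for
`f(t) = t/4 + e(1 - t^{2-m})/(2-m) + c t^{1-m}`. Then there exist `C > 0` and `T > 0` such that
for all `t ≥ T`, `|h(t) - 4^{2-m} (m-1) e t^{-m}| ≤ C t^{1-2m}`. -/
theorem stmt7 (m : ℕ) (hm : 2 < m) (e c : ℝ) (f f' f'' g g' : ℝ → ℝ)
    (hf : ∀ t : ℝ, 0 < t →
      f t = t / 4 + e * (1 - t ^ ((2 : ℤ) - m)) / ((2 : ℝ) - m) + c * t ^ ((1 : ℤ) - m))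
    (hf' : ∀ t : ℝ, 0 < t → HasDerivAt f (f' t) t)
    (hf'' : ∀ t : ℝ, 0 < t → HasDerivAt f' (f'' t) t)
    (hg : ∀ t : ℝ, 0 < t → g t = f' t ^ (m - 1) * (f' t + t * f'' t))
    (hg' : ∀ t : ℝ, 0 < t → HasDerivAt g (g' t) t) :
    ∃ C > (0 : ℝ), ∃ T > (0 : ℝ), ∀ t ≥ T,
      |g' t / (f' t + t * f'' t)
          - (4 : ℝ) ^ ((2 : ℤ) - m) * ((m : ℝ) - 1) * e * t ^ (-(m : ℤ))|
        ≤ C * t ^ ((1 : ℤ) - 2 * m) := by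
  have hfA : ∀ s : ℝ, 0 < s → f' s = Af m e c s := by
    intro s hs
    refine (hf' s hs).unique ((hasDerivAt_F m hm e c hs.ne').congr_of_eventuallyEq ?_)
    filter_upwards [Ioi_mem_nhds hs] with x hx using hf x hx
  have hfAd : ∀ s : ℝ, 0 < s → f'' s = Ad m e c s := by
    intro s hs
    refine (hf'' s hs).unique ((hasDerivAt_Af m e c hs.ne').congr_of_eventuallyEq ?_)
    filter_upwards [Ioi_mem_nhds hs] with x hx using hfA x hx
  have hgd : ∀ s : ℝ, 0 < s → g' s
      = ((m:ℝ) - 1) * Af m e c s ^ (m - 2) * Ad m e c s * Bf m e c s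
        + Af m e c s ^ (m - 1) * Bd m e c s := by
    intro s hs
    refine (hg' s hs).unique ((hasDerivAt_G m hm e c hs.ne').congr_of_eventuallyEq ?_)
    filter_upwards [Ioi_mem_nhds hs] with x hx
    rw [hg x hx, hfA x hx, hfAd x hx]
  obtain ⟨C, hC, T, hT, hmain⟩ := estimate m hm e c
  refine ⟨C, hC, T, hT, ?_⟩
  intro t htT
  have ht0 : 0 < t := lt_of_lt_of_le hT htT
  obtain ⟨hBne, hbound⟩ := hmain t htT
  rw [hgd t ht0, hfA t ht0, hfAd t ht0,
    show Af m e c t + t * Ad m e c t = Bf m e c t from rfl]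
  exact hbound
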